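/- Let M be a metric space with base point e. The space lip₀(M) of Lipschitz functions vanishing at e is dense, with respect to the topology of pointwise convergence, in the space C_e(M) = {f ∈ C(M) : f(e) = 0} of continuous functions vanishing at e. -/
import Mathlib

lemma exists_lipschitzOnWith_finset {M : Type*} [MetricSpace M] (s : Finset M)
    (f : M → ℝ) : ∃ K : NNReal, LipschitzOnWith K f ↑s := by
  refine ⟨Finset.sup (s ×ˢ s) fun p => nndist (f p.1) (f p.2) / nndist p.1 p.2, ?_⟩
  rw [lipschitzOnWith_iff_dist_le_mul]
  intro x hx y hy
  rcases eq_or_ne x y with rfl | h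
  · simp
  · have hd : nndist x y ≠ 0 := by simpa using h
    have hle : nndist (f x) (f y) / nndist x y ≤
        Finset.sup (s ×ˢ s) fun p => nndist (f p.1) (f p.2) / nndist p.1 p.2 :=
      Finset.le_sup (b := (x, y)) (f := fun p : M × M => nndist (f p.1) (f p.2) / nndist p.1 p.2)
        (Finset.mem_product.2 ⟨Finset.mem_coe.1 hx, Finset.mem_coe.1 hy⟩)
    have key : nndist (f x) (f y) ≤
        (Finset.sup (s ×ˢ s) fun p => nndist (f p.1) (f p.2) / nndist p.1 p.2) *
          nndist x y := by
      calc nndist (f x) (f y) = nndist (f x) (f y) / nndist x y * nndist x y := by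
            rw [div_mul_cancel₀ _ hd]
        _ ≤ _ := mul_le_mul_left hle _
    rw [dist_nndist, dist_nndist, ← NNReal.coe_mul]
    exact_mod_cast key

theorem stmt_9 {M : Type*} [MetricSpace M] (e : M) :
    ∀ g : M → ℝ, Continuous g → g e = 0 →
      g ∈ closure {f : M → ℝ | (∃ K : NNReal, LipschitzWith K f) ∧ f e = 0} := by
  classical
  intro g hg hg0
  rw [mem_closure_iff]
  intro U hU hgU
  obtain ⟨I, u, h1, h2⟩ := isOpen_pi_iff.1 hU g hgU
  obtain ⟨K, hK⟩ := exists_lipschitzOnWith_finset (insert e I) g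
  obtain ⟨f, hf, hfg⟩ := hK.extend_real
  refine ⟨f, h2 ?_, ⟨K, hf⟩, ?_⟩
  · intro i hi
    rw [← hfg (Finset.mem_coe.2 (Finset.mem_insert_of_mem (Finset.mem_coe.1 hi)))]
    exact (h1 i hi).2
  · rw [← hfg (by simp)]
    exact hg0
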